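/- Let q be a prime power, let ω ∈ F_{q²} \ F_q, let γ be a generator of the multiplicative group F_{q²}^×, and let G ⊆ PGL₂(F_q) be the stabilizer of ω for the Möbius action on P¹(F_{q²}). Then the set B = { (ωγ^i + ω^q)/(γ^i + 1) : 0 ≤ i < q−1 } is a complete set of unique orbit representatives for the action of G on P¹(F_{q²}) \ {ω, ω^q}: every G-orbit in P¹(F_{q²}) \ {ω, ω^q} contains exactly one element of B. -/

import Mathlib

open Matrix
open scoped LinearAlgebra.Projectivization

/-- The Möbius action of `GL(2,K)` on the projective line `ℙ K (Fin 2 → K)`.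
Since scalar matrices act trivially, this realizes the action of `PGL₂(K)`. -/
noncomputable def mobius {K : Type*} [Field K] (M : GL (Fin 2) K)
    (p : ℙ K (Fin 2 → K)) : ℙ K (Fin 2 → K) :=
  Projectivization.map
    (LinearMap.GeneralLinearGroup.toLinearEquiv
      (Matrix.GeneralLinearGroup.toLin M)).toLinearMap
    (LinearEquiv.injective _) p

/-- The point `[x : 1]` of the projective line. -/
noncomputable def pt {K : Type*} [Field K] (x : K) : ℙ K (Fin 2 → K) :=
  Projectivization.mk K ![x, 1] (by
    intro h
    simpa using congrFun h 1)

theorem pt_vec_ne_zero {K : Type*} [Field K] (x : K) : (![x, 1] : Fin 2 → K) ≠ 0 := by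
  intro h
  simpa using congrFun h 1

theorem pt_eq {K : Type*} [Field K] (x : K) :
    pt x = Projectivization.mk K ![x, 1] (pt_vec_ne_zero x) := rfl

theorem mulVec_ne_zero {K : Type*} [Field K] (M : GL (Fin 2) K) (v : Fin 2 → K) (hv : v ≠ 0) :
    M.val.mulVec v ≠ 0 := by
  intro h
  apply hv
  have h2 : (M⁻¹).val.mulVec (M.val.mulVec v) = v := by
    rw [Matrix.mulVec_mulVec, Units.inv_mul, Matrix.one_mulVec]
  rw [h, Matrix.mulVec_zero] at h2
  exact h2.symm

theorem mobius_mk {K : Type*} [Field K] (M : GL (Fin 2) K) (v : Fin 2 → K) (hv : v ≠ 0) :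
    mobius M (Projectivization.mk K v hv) =
      Projectivization.mk K (M.val.mulVec v) (mulVec_ne_zero M v hv) := by
  rw [mobius, Projectivization.map_mk]
  simp only [LinearEquiv.coe_coe, Matrix.GeneralLinearGroup.toLin_apply, Matrix.mulVecLin_apply]
  rfl

theorem mem_range_iff_pow {F K : Type*} [Field F] [Fintype F] [Field K] [Fintype K]
    [Algebra F K] (q : ℕ) (hq : Fintype.card F = q) (x : K) :
    x ∈ Set.range (algebraMap F K) ↔ x ^ q = x := by
  classical
  have hq2 : 2 ≤ q := hq ▸ Fintype.one_lt_card
  constructor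
  · rintro ⟨y, rfl⟩
    rw [← map_pow, ← hq, FiniteField.pow_card]
  · intro hx
    set P : Polynomial K := Polynomial.X ^ q - Polynomial.X with hP
    have hPdeg : P.natDegree = q := by
      rw [hP]
      have h1 : (Polynomial.X : Polynomial K).natDegree < ((Polynomial.X : Polynomial K) ^ q).natDegree := by
        simp [Polynomial.natDegree_X_pow]; omega
      rw [Polynomial.natDegree_sub_eq_left_of_natDegree_lt h1, Polynomial.natDegree_X_pow]
    have hPne : P ≠ 0 := fun h => by simp [h] at hPdeg; omega
    have hroot : ∀ z : K, z ^ q = z → z ∈ P.roots := by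
      intro z hz
      rw [Polynomial.mem_roots hPne]
      simp [hP, Polynomial.IsRoot, hz]
    set S : Finset K := Finset.univ.image (algebraMap F K) with hS
    have hScard : S.card = q := by
      rw [hS, Finset.card_image_of_injective _ (algebraMap F K).injective, Finset.card_univ, hq]
    have hSsub : S ⊆ P.roots.toFinset := by
      intro z hz
      rw [hS, Finset.mem_image] at hz
      obtain ⟨y, -, rfl⟩ := hz
      rw [Multiset.mem_toFinset]
      exact hroot _ (by rw [← map_pow, ← hq, FiniteField.pow_card])
    have hcard : P.roots.toFinset.card ≤ q := by
      calc P.roots.toFinset.card ≤ Multiset.card P.roots := P.roots.toFinset_card_le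
        _ ≤ P.natDegree := P.card_roots'
        _ = q := hPdeg
    have hEq : S = P.roots.toFinset := Finset.eq_of_subset_of_card_le hSsub (hScard ▸ hcard)
    have hxS : x ∈ S := by
      rw [hEq, Multiset.mem_toFinset]
      exact hroot x hx
    rw [hS, Finset.mem_image] at hxS
    obtain ⟨y, -, rfl⟩ := hxS
    exact ⟨y, rfl⟩

theorem frob_add {F K : Type*} [Field F] [Fintype F] [Field K]
    [Algebra F K] (q : ℕ) (hq : Fintype.card F = q) (a b : K) :
    (a + b) ^ q = a ^ q + b ^ q := by
  have hp : Fact (ringChar F).Prime := ⟨CharP.char_is_prime F _⟩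
  obtain ⟨n, -, hcard⟩ := FiniteField.card F (ringChar F)
  haveI : CharP K (ringChar F) := charP_of_injective_algebraMap (algebraMap F K).injective _
  rw [← hq, hcard]
  exact add_pow_char_pow a b (ringChar F) n

theorem exists_decomp {F K : Type*} [Field F] [Fintype F] [Field K] [Fintype K]
    [Algebra F K] (q : ℕ) (hq : Fintype.card F = q) (hK : Fintype.card K = q ^ 2)
    (ω : K) (hω : ω ∉ Set.range (algebraMap F K)) (z : K) :
    ∃ x y : F, z = algebraMap F K x + algebraMap F K y * ω := by
  classical
  set f : F × F → K := fun w => algebraMap F K w.1 + algebraMap F K w.2 * ω with hf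
  have hinj : Function.Injective f := by
    rintro ⟨x, y⟩ ⟨x', y'⟩ h
    simp only [hf] at h
    by_cases hy : y = y'
    · subst hy
      have : algebraMap F K x = algebraMap F K x' := by linear_combination h
      have := (algebraMap F K).injective this
      simp [this]
    · exfalso
      apply hω
      refine ⟨(x - x') / (y' - y), ?_⟩
      have hyne : algebraMap F K (y' - y) ≠ 0 := by
        simp only [ne_eq, map_eq_zero, sub_eq_zero]
        exact fun hc => hy hc.symm
      rw [map_div₀, div_eq_iff hyne, _root_.map_sub, _root_.map_sub]
      linear_combination h
  have hsurj : Function.Surjective f := by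
    have hcards : Fintype.card (F × F) = Fintype.card K := by
      simp [Fintype.card_prod, hq, hK, sq]
    exact (Fintype.bijective_iff_injective_and_card f).mpr ⟨hinj, hcards⟩ |>.2
  obtain ⟨⟨x, y⟩, hxy⟩ := hsurj z
  exact ⟨x, y, hxy.symm⟩

/-- Let `q` be a prime power, `F` the field with `q` elements, `K = F_{q²}`, `ω ∈ K \ F`,
and `γ` a generator of `K^×`.  Let `G ⊆ PGL₂(F)` be the stabilizer of `ω` for the Möbius
action on `ℙ¹(K)`.  The points `[ωγⁱ + ω^q : γⁱ + 1]` (which equal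
`(ωγⁱ + ω^q)/(γⁱ + 1)`, interpreted as the point at infinity when `γⁱ = −1`), for
`0 ≤ i < q − 1`, form a complete set of unique orbit representatives for `G` acting on
`ℙ¹(K) \ {ω, ω^q}`: every point of `ℙ¹(K) \ {ω, ω^q}` lies in the `G`-orbit of exactly
one of them. -/
theorem orbit_representatives_for_stabilizer
    {F : Type*} [Field F] [Fintype F] (q : ℕ) (hq : Fintype.card F = q)
    {K : Type*} [Field K] [Fintype K] [Algebra F K]
    (hK : Fintype.card K = q ^ 2)
    (ω : K) (hω : ω ∉ Set.range (algebraMap F K))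
    (γ : Kˣ) (hγ : ∀ x : Kˣ, x ∈ Subgroup.zpowers γ)
    (p : ℙ K (Fin 2 → K)) (hp₁ : p ≠ pt ω) (hp₂ : p ≠ pt (ω ^ q)) :
    ∃! i : ℕ, i < q - 1 ∧
      ∃ h : (![ω * (γ : K) ^ i + ω ^ q, (γ : K) ^ i + 1] : Fin 2 → K) ≠ 0,
      ∃ M : GL (Fin 2) F,
        mobius (Matrix.GeneralLinearGroup.map (algebraMap F K) M) (pt ω) = pt ω ∧
        mobius (Matrix.GeneralLinearGroup.map (algebraMap F K) M) p =
          Projectivization.mk K _ h := by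
  classical
  have hq2 : 2 ≤ q := hq ▸ Fintype.one_lt_card
  have hrange : ∀ x : K, x ∈ Set.range (algebraMap F K) ↔ x ^ q = x :=
    mem_range_iff_pow q hq
  have hfrob : ∀ a b : K, (a + b) ^ q = a ^ q + b ^ q := frob_add q hq
  have hfrobs : ∀ a b : K, (a - b) ^ q = a ^ q - b ^ q := by
    intro a b
    have h := hfrob (a - b) b
    rw [sub_add_cancel] at h
    linear_combination -h
  have hωq : ω ^ q ≠ ω := fun h => hω ((hrange ω).mpr h)
  have hωsub : ω ^ q - ω ≠ 0 := sub_ne_zero.mpr hωq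
  have hKpow : ∀ x : K, x ^ q ^ 2 = x := fun x => hK ▸ FiniteField.pow_card x
  have hωqq : (ω ^ q) ^ q = ω := by rw [← pow_mul, ← sq]; exact hKpow ω
  -- the matrix over K associated to M : GL (Fin 2) F
  set lift : GL (Fin 2) F → Matrix (Fin 2) (Fin 2) K :=
    fun M => (Matrix.GeneralLinearGroup.map (algebraMap F K) M).val with hlift
  have hliftval : ∀ M : GL (Fin 2) F, lift M = M.val.map (algebraMap F K) := fun _ => rfl
  have hliftfix : ∀ (M : GL (Fin 2) F) (i j : Fin 2), (lift M i j) ^ q = lift M i j := by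
    intro M i j
    rw [hliftval, Matrix.map_apply]
    exact (hrange _).mp ⟨_, rfl⟩
  have hmv : ∀ (A : Matrix (Fin 2) (Fin 2) K) (z : Fin 2 → K),
      (A.mulVec z) 0 = A 0 0 * z 0 + A 0 1 * z 1 ∧
      (A.mulVec z) 1 = A 1 0 * z 0 + A 1 1 * z 1 := by
    intro A z
    constructor <;> simp [Matrix.mulVec, dotProduct, Fin.sum_univ_two]
  -- injectivity helper
  have inj2 : ∀ z : Fin 2 → K, z 0 - ω * z 1 = 0 → z 0 - ω ^ q * z 1 = 0 → z = 0 := by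
    intro z h1 h2
    have hz1 : z 1 = 0 := by
      have hmul : (ω ^ q - ω) * z 1 = 0 := by linear_combination h1 - h2
      rcases mul_eq_zero.mp hmul with h | h
      · exact absurd h hωsub
      · exact h
    have hz0 : z 0 = 0 := by rw [hz1] at h1; linear_combination h1
    funext j; fin_cases j <;> simp [hz0, hz1]
  -- representative vector of p
  have hv : p.rep ≠ 0 := p.rep_nonzero
  set v : Fin 2 → K := p.rep with hvdef
  have hpv : Projectivization.mk K v hv = p := p.mk_rep
  have hexcl : ∀ x : K, p ≠ pt x → v 0 - x * v 1 ≠ 0 := by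
    intro x hpx h
    apply hpx
    rw [← hpv]
    have hv1 : v 1 ≠ 0 := by
      intro h1
      apply hv
      funext j
      fin_cases j
      · show v 0 = 0
        rw [h1] at h; linear_combination h
      · exact h1
    rw [pt_eq, Projectivization.mk_eq_mk_iff]
    refine ⟨Units.mk0 (v 1) hv1, ?_⟩
    funext j
    fin_cases j
    · simp only [Units.smul_def, Pi.smul_apply, smul_eq_mul, Units.val_mk0,
        Matrix.cons_val_zero]
      show v 1 * x = v 0
      linear_combination -h
    · simp [Units.smul_def]
  have hn : v 0 - ω * v 1 ≠ 0 := hexcl ω hp₁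
  have hd : v 0 - ω ^ q * v 1 ≠ 0 := hexcl (ω ^ q) hp₂
  -- the representative vectors
  set wv : ℕ → Fin 2 → K := fun i => ![ω * (γ : K) ^ i + ω ^ q, (γ : K) ^ i + 1] with hwv
  have hwn : ∀ i, (wv i) 0 - ω * (wv i) 1 = ω ^ q - ω := by
    intro i; simp [hwv]; ring
  have hwd : ∀ i, (wv i) 0 - ω ^ q * (wv i) 1 = (ω - ω ^ q) * (γ : K) ^ i := by
    intro i; simp [hwv]; ring
  have hwdne : ∀ i, (wv i) 0 - ω ^ q * (wv i) 1 ≠ 0 := by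
    intro i
    rw [hwd i]
    exact mul_ne_zero (fun h => hωsub (by linear_combination -h)) (pow_ne_zero _ γ.ne_zero)
  have hw0 : ∀ i, wv i ≠ 0 := by
    intro i h
    apply hwdne i
    rw [h]
    simp
  -- proportionality criterion
  have propl : ∀ x w : Fin 2 → K, x 0 - ω ^ q * x 1 ≠ 0 → w 0 - ω ^ q * w 1 ≠ 0 →
      (x 0 - ω * x 1) * (w 0 - ω ^ q * w 1) = (w 0 - ω * w 1) * (x 0 - ω ^ q * x 1) →
      ∃ a : Kˣ, a • w = x := by
    intro x w hdx hdw hcross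
    refine ⟨Units.mk0 ((x 0 - ω ^ q * x 1) / (w 0 - ω ^ q * w 1)) (div_ne_zero hdx hdw), ?_⟩
    set a : K := (x 0 - ω ^ q * x 1) / (w 0 - ω ^ q * w 1) with hadef
    have ha' : a * (w 0 - ω ^ q * w 1) = x 0 - ω ^ q * x 1 := by
      rw [hadef, div_mul_cancel₀ _ hdw]
    have key : a • w - x = 0 := by
      apply inj2
      · have : a * (w 0 - ω * w 1) = x 0 - ω * x 1 := by
          rw [hadef]
          field_simp
          linear_combination -hcross
        simp only [Pi.sub_apply, Pi.smul_apply, smul_eq_mul]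
        linear_combination this
      · simp only [Pi.sub_apply, Pi.smul_apply, smul_eq_mul]
        linear_combination ha'
    have := sub_eq_zero.mp key
    simpa [Units.smul_def] using this
  -- analysis of a matrix fixing pt ω : the multiplier μ
  have multlem : ∀ M : GL (Fin 2) F,
      mobius (Matrix.GeneralLinearGroup.map (algebraMap F K) M) (pt ω) = pt ω →
      ∃ μ : K, μ ≠ 0 ∧ ∀ z : Fin 2 → K,
        ((lift M).mulVec z) 0 - ω * ((lift M).mulVec z) 1 = μ * (z 0 - ω * z 1) ∧
        ((lift M).mulVec z) 0 - ω ^ q * ((lift M).mulVec z) 1 = μ ^ q * (z 0 - ω ^ q * z 1) := by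
    intro M hfix
    set A : Matrix (Fin 2) (Fin 2) K := lift M with hA
    rw [pt_eq, mobius_mk, Projectivization.mk_eq_mk_iff] at hfix
    obtain ⟨a, ha⟩ := hfix
    have ha0 := congrFun ha 0
    have ha1 := congrFun ha 1
    simp only [Units.smul_def, Pi.smul_apply, smul_eq_mul, Matrix.cons_val_zero,
      Matrix.cons_val_one, Matrix.head_cons, mul_one] at ha0 ha1
    rw [(hmv A ![ω, 1]).1] at ha0
    rw [(hmv A ![ω, 1]).2] at ha1
    simp only [Matrix.cons_val_zero, Matrix.cons_val_one, Matrix.head_cons, mul_one] at ha0 ha1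
    -- ha0 : a * ω = A 0 0 * ω + A 0 1 ;  ha1 : a = A 1 0 * ω + A 1 1
    have Rel : A 0 0 * ω + A 0 1 = (A 1 0 * ω + A 1 1) * ω := by
      linear_combination -ha0 + ω * ha1
    have hdetM : M.val.det ≠ 0 := by
      have := (Matrix.isUnit_iff_isUnit_det M.val).mp M.isUnit
      exact this.ne_zero
    have hdetA : A.det ≠ 0 := by
      have hdm : ((M.val).map (algebraMap F K)).det = algebraMap F K (M.val.det) := by
        rw [← RingHom.mapMatrix_apply, ← RingHom.map_det]
      rw [hA, hliftval, hdm]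
      simpa using hdetM
    have hμne : A 0 0 - A 1 0 * ω ≠ 0 := by
      intro h0
      by_cases hc : M.val 1 0 = 0
      · have hA10 : A 1 0 = 0 := by rw [hA, hliftval, Matrix.map_apply, hc, map_zero]
        have hA00 : A 0 0 = 0 := by rw [hA10] at h0; linear_combination h0
        apply hdetA
        rw [Matrix.det_fin_two, hA00, hA10]; ring
      · apply hω
        have hA10 : A 1 0 ≠ 0 := by
          rw [hA, hliftval, Matrix.map_apply]
          simpa using hc
        refine ⟨M.val 0 0 / M.val 1 0, ?_⟩
        have e0 : (algebraMap F K) (M.val 0 0) = A 0 0 := rfl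
        have e1 : (algebraMap F K) (M.val 1 0) = A 1 0 := rfl
        rw [map_div₀, e0, e1, div_eq_iff hA10]
        linear_combination h0
    refine ⟨A 0 0 - A 1 0 * ω, hμne, ?_⟩
    have hμq : (A 0 0 - A 1 0 * ω) ^ q = A 0 0 - A 1 0 * ω ^ q := by
      rw [hfrobs, mul_pow, hliftfix, hliftfix]
    have RelQ : A 0 0 * ω ^ q + A 0 1 = (A 1 0 * ω ^ q + A 1 1) * ω ^ q := by
      have h1 : (A 0 0 * ω + A 0 1) ^ q = ((A 1 0 * ω + A 1 1) * ω) ^ q := by rw [Rel]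
      rw [hfrob, mul_pow, mul_pow, hfrob, mul_pow,
        hliftfix, hliftfix, hliftfix, hliftfix] at h1
      linear_combination h1
    intro z
    rw [(hmv A z).1, (hmv A z).2]
    constructor
    · linear_combination (z 1) * Rel
    · rw [hμq]
      linear_combination (z 1) * RelQ
  -- trace and norm of ω lie in F
  obtain ⟨T, hT⟩ : ω + ω ^ q ∈ Set.range (algebraMap F K) := by
    rw [hrange, hfrob, hωqq]; ring
  obtain ⟨NN, hNN⟩ : ω * ω ^ q ∈ Set.range (algebraMap F K) := by
    rw [hrange, mul_pow, hωqq]; ring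
  -- the scalar condition
  set SC : ℕ → Prop := fun i => ∃ μ : K, μ ≠ 0 ∧
    μ ^ q * (v 0 - ω ^ q * v 1) = -((γ : K) ^ i * (v 0 - ω * v 1) * μ) with hSC
  -- construction: from the scalar condition build a matrix
  have construct : ∀ i : ℕ, SC i →
      ∃ M : GL (Fin 2) F,
        mobius (Matrix.GeneralLinearGroup.map (algebraMap F K) M) (pt ω) = pt ω ∧
        mobius (Matrix.GeneralLinearGroup.map (algebraMap F K) M) p =
          Projectivization.mk K (wv i) (hw0 i) := by
    intro i hsc
    obtain ⟨μ, hμ, hμeq⟩ := hsc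
    obtain ⟨x, y, hxy⟩ := exists_decomp q hq hK ω hω μ
    -- the matrix
    set M0 : Matrix (Fin 2) (Fin 2) F := !![x, y * NN; -y, x + y * T] with hM0
    have hμq' : μ ^ q = algebraMap F K x + algebraMap F K y * ω ^ q := by
      rw [hxy, hfrob, mul_pow]
      congr 1
      · exact (hrange _).mp ⟨x, rfl⟩
      · congr 1
        exact (hrange _).mp ⟨y, rfl⟩
    have hμqne : μ ^ q ≠ 0 := pow_ne_zero _ hμ
    have hdet0 : algebraMap F K M0.det = μ * μ ^ q := by
      have hd2 : M0.det = x * (x + y * T) - y * NN * (-y) := by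
        rw [hM0, Matrix.det_fin_two_of]
      rw [hd2]
      simp only [_root_.map_sub, _root_.map_mul, _root_.map_add, _root_.map_neg]
      rw [hT, hNN, hμq']
      try rw [hxy]
      try ring
    have hdetne : M0.det ≠ 0 := by
      intro h0
      apply mul_ne_zero hμ hμqne
      rw [← hdet0, h0, map_zero]
    set M : GL (Fin 2) F := Matrix.GeneralLinearGroup.mk'' M0 (isUnit_iff_ne_zero.mpr hdetne) with hM
    have hMval : M.val = M0 := rfl
    set A : Matrix (Fin 2) (Fin 2) K := lift M with hA
    have hAentry : A = !![algebraMap F K x, algebraMap F K (y * NN);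
        algebraMap F K (-y), algebraMap F K (x + y * T)] := by
      rw [hA, hliftval, hMval, hM0]
      ext i' j'
      fin_cases i' <;> fin_cases j' <;> simp
    have hA00 : A 0 0 = algebraMap F K x := by rw [hAentry]; simp
    have hA01 : A 0 1 = algebraMap F K y * (ω * ω ^ q) := by
      rw [hAentry]; simp [_root_.map_mul, hNN]
    have hA10 : A 1 0 = -(algebraMap F K y) := by rw [hAentry]; simp
    have hA11 : A 1 1 = algebraMap F K x + algebraMap F K y * (ω + ω ^ q) := by
      rw [hAentry]; simp [_root_.map_add, _root_.map_mul, hT]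
    -- the multiplier identities
    have hmult : ∀ z : Fin 2 → K,
        (A.mulVec z) 0 - ω * (A.mulVec z) 1 = μ * (z 0 - ω * z 1) ∧
        (A.mulVec z) 0 - ω ^ q * (A.mulVec z) 1 = μ ^ q * (z 0 - ω ^ q * z 1) := by
      intro z
      rw [(hmv A z).1, (hmv A z).2, hA00, hA01, hA10, hA11]
      constructor
      · rw [hxy]; ring
      · rw [hμq']; ring
    -- M fixes pt ω
    have hfix : mobius (Matrix.GeneralLinearGroup.map (algebraMap F K) M) (pt ω) = pt ω := by
      rw [pt_eq, mobius_mk]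
      have hAmv : (Matrix.GeneralLinearGroup.map (algebraMap F K) M).val = A := rfl
      rw [Projectivization.mk_eq_mk_iff]
      obtain ⟨e1, e2⟩ := hmult ![ω, 1]
      simp only [Matrix.cons_val_zero, Matrix.cons_val_one, Matrix.head_cons, mul_one] at e1 e2
      rw [sub_self, mul_zero] at e1
      -- e1 : (A.mulVec ![ω,1]) 0 - ω * (A.mulVec ![ω,1]) 1 = 0
      have ht1 : (A.mulVec ![ω, 1]) 1 ≠ 0 := by
        intro h0
        rw [h0, mul_zero, sub_zero] at e1 e2
        rw [e1] at e2
        exact mul_ne_zero hμqne (fun hh => hωsub (by linear_combination -hh)) e2.symm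
      refine ⟨Units.mk0 ((A.mulVec ![ω, 1]) 1) ht1, ?_⟩
      funext j
      fin_cases j
      · show (A.mulVec ![ω, 1]) 1 * ω = ((Matrix.GeneralLinearGroup.map (algebraMap F K) M).val.mulVec ![ω, 1]) 0
        rw [hAmv]
        linear_combination -e1
      · show (A.mulVec ![ω, 1]) 1 * 1 = ((Matrix.GeneralLinearGroup.map (algebraMap F K) M).val.mulVec ![ω, 1]) 1
        rw [hAmv]
        ring
    refine ⟨M, hfix, ?_⟩
    rw [← hpv, mobius_mk, Projectivization.mk_eq_mk_iff]
    have hAmv : (Matrix.GeneralLinearGroup.map (algebraMap F K) M).val = A := rfl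
    rw [hAmv]
    apply propl
    · rw [(hmult v).2]
      exact mul_ne_zero hμqne hd
    · exact hwdne i
    · rw [(hmult v).1, (hmult v).2, hwn i, hwd i]
      linear_combination (ω - ω ^ q) * hμeq
  -- equivalence between the matrix condition and the scalar condition
  have equiv1 : ∀ i : ℕ,
      ((∃ h : (![ω * (γ : K) ^ i + ω ^ q, (γ : K) ^ i + 1] : Fin 2 → K) ≠ 0,
        ∃ M : GL (Fin 2) F,
          mobius (Matrix.GeneralLinearGroup.map (algebraMap F K) M) (pt ω) = pt ω ∧
          mobius (Matrix.GeneralLinearGroup.map (algebraMap F K) M) p =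
            Projectivization.mk K _ h) ↔ SC i) := by
    intro i
    constructor
    · rintro ⟨h, M, hfix, hmap⟩
      obtain ⟨μ, hμ, hmult⟩ := multlem M hfix
      rw [← hpv, mobius_mk, Projectivization.mk_eq_mk_iff] at hmap
      obtain ⟨a, ha⟩ := hmap
      have hAmv : (Matrix.GeneralLinearGroup.map (algebraMap F K) M).val = lift M := rfl
      rw [hAmv] at ha
      have ha0 := congrFun ha 0
      have ha1 := congrFun ha 1
      simp only [Units.smul_def, Pi.smul_apply, smul_eq_mul] at ha0 ha1
      -- wv i is the target vector
      have hwveq : (![ω * (γ : K) ^ i + ω ^ q, (γ : K) ^ i + 1] : Fin 2 → K) = wv i := rfl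
      rw [hwveq] at ha0 ha1
      have E1 : μ * (v 0 - ω * v 1) = (a : K) * (ω ^ q - ω) := by
        rw [← (hmult v).1, ← hwn i]
        rw [← ha0, ← ha1]
        ring
      have E2 : μ ^ q * (v 0 - ω ^ q * v 1) = (a : K) * ((ω - ω ^ q) * (γ : K) ^ i) := by
        rw [← (hmult v).2, ← hwd i]
        rw [← ha0, ← ha1]
        ring
      exact ⟨μ, hμ, by linear_combination E2 + (γ : K) ^ i * E1⟩
    · intro hsc
      obtain ⟨M, hfix, hmap⟩ := construct i hsc
      exact ⟨hw0 i, M, hfix, hmap⟩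
  -- now the number theory
  have horder : orderOf γ = q ^ 2 - 1 := by
    rw [orderOf_eq_card_of_forall_mem_zpowers hγ, Nat.card_eq_fintype_card,
      Fintype.card_units, hK]
  set U : Kˣ := Units.mk0 (v 0 - ω * v 1) hn * (Units.mk0 (v 0 - ω ^ q * v 1) hd)⁻¹ with hU
  obtain ⟨k, hk0⟩ := hγ (-U)
  have hk : γ ^ k = -U := hk0
  have hq1 : ((q : ℤ) - 1) ≠ 0 := by
    have : (2 : ℤ) ≤ q := by exact_mod_cast hq2
    omega
  have hdvd_iff : ∀ i : ℕ, SC i ↔ ((q : ℤ) - 1) ∣ ((i : ℤ) + k) := by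
    intro i
    have hcast : ((q - 1 : ℕ) : ℤ) = (q : ℤ) - 1 := by
      have : (1 : ℕ) ≤ q := by omega
      exact_mod_cast Int.ofNat_sub this
    constructor
    · rintro ⟨μ, hμ, heq⟩
      set ν : Kˣ := Units.mk0 μ hμ with hν
      have hpow : μ ^ (q - 1) * μ = μ ^ q := by
        rw [← pow_succ]
        congr 1
        omega
      have key : μ ^ (q - 1) * (v 0 - ω ^ q * v 1) * μ =
          -((γ : K) ^ i * (v 0 - ω * v 1)) * μ := by
        linear_combination heq + (v 0 - ω ^ q * v 1) * hpow
      have key2 := mul_right_cancel₀ hμ key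
      have hstep : ν ^ (q - 1) = γ ^ i * (-U) := by
        apply Units.ext
        simp only [Units.val_pow_eq_pow_val, Units.val_mul, Units.val_neg, hU, hν,
          Units.val_mk0, Units.val_inv_eq_inv_val]
        rw [eq_comm]
        calc (γ : K) ^ i * -((v 0 - ω * v 1) * (v 0 - ω ^ q * v 1)⁻¹)
            = (-((γ : K) ^ i * (v 0 - ω * v 1))) * (v 0 - ω ^ q * v 1)⁻¹ := by ring
          _ = (μ ^ (q - 1) * (v 0 - ω ^ q * v 1)) * (v 0 - ω ^ q * v 1)⁻¹ := by rw [key2]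
          _ = μ ^ (q - 1) := by field_simp
      have hνeq : ν ^ (q - 1) = γ ^ ((i : ℤ) + k) := by
        rw [_root_.zpow_add, hk, _root_.zpow_natCast, hstep]
      -- deduce divisibility
      obtain ⟨l, hl⟩ := hγ ν
      rw [← hl, ← _root_.zpow_natCast, ← _root_.zpow_mul] at hνeq
      have : γ ^ (l * ((q - 1 : ℕ) : ℤ) - ((i : ℤ) + k)) = 1 := by
        rw [_root_.zpow_sub, hνeq, mul_inv_cancel]
      have hdvd := orderOf_dvd_iff_zpow_eq_one.mpr this
      rw [horder] at hdvd
      have hfac : ((q ^ 2 - 1 : ℕ) : ℤ) = ((q : ℤ) - 1) * ((q : ℤ) + 1) := by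
        have h1 : (1 : ℕ) ≤ q ^ 2 := by nlinarith
        push_cast [Int.ofNat_sub h1]
        ring
      rw [hfac] at hdvd
      have : ((q : ℤ) - 1) ∣ l * ((q - 1 : ℕ) : ℤ) - ((i : ℤ) + k) :=
        dvd_trans ⟨(q : ℤ) + 1, rfl⟩ hdvd
      have h2 : ((q : ℤ) - 1) ∣ l * ((q - 1 : ℕ) : ℤ) := by
        rw [hcast]; exact ⟨l, by ring⟩
      have h3 := dvd_sub h2 this
      rw [sub_sub_cancel] at h3
      exact h3
    · rintro ⟨j, hj⟩
      refine ⟨(γ : K) ^ j, ?_, ?_⟩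
      · exact zpow_ne_zero _ γ.ne_zero
      · -- (γ^j)^q * dv = -(γ^i * nv * γ^j)
        have hunit : (γ ^ j) ^ (q - 1) = γ ^ ((i : ℤ) + k) := by
          rw [← _root_.zpow_natCast (γ ^ j) (q - 1), ← _root_.zpow_mul, hj]
          congr 1
          rw [hcast]
          ring
        -- translate back to K
        have hunit2 : (γ ^ j) ^ (q - 1) = γ ^ i * (-U) := by
          rw [hunit, _root_.zpow_add, hk, _root_.zpow_natCast]
        have hval := congrArg (Units.val) hunit2
        simp only [Units.val_pow_eq_pow_val, Units.val_zpow_eq_zpow_val, Units.val_mul,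
          Units.val_neg, hU, Units.val_mk0, Units.val_inv_eq_inv_val] at hval
        -- hval : ((γ:K)^j)^(q-1) = (γ:K)^i * (-(nv * dv⁻¹))
        have hγj : ((γ : K) ^ j) ≠ 0 := zpow_ne_zero _ γ.ne_zero
        have hpow : ((γ : K) ^ j) ^ (q - 1) * ((γ : K) ^ j) = ((γ : K) ^ j) ^ q := by
          rw [← pow_succ]
          congr 1
          omega
        rw [← hpow]
        rw [hval]
        have hd' : v 0 - v 1 * ω ^ q ≠ 0 := by rw [mul_comm]; exact hd
        field_simp
  -- final step: unique i
  have hq1' : 0 < (q : ℤ) - 1 := by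
    have : (2 : ℤ) ≤ q := by exact_mod_cast hq2
    omega
  set r : ℤ := (-k) % ((q : ℤ) - 1) with hr
  have hr0 : 0 ≤ r := Int.emod_nonneg _ (by omega)
  have hrlt : r < (q : ℤ) - 1 := Int.emod_lt_of_pos _ hq1'
  refine ⟨r.toNat, ⟨?_, ?_⟩, ?_⟩
  · omega
  · rw [equiv1, hdvd_iff]
    have : ((r.toNat : ℤ)) = r := Int.toNat_of_nonneg hr0
    rw [this]
    have hdq : ((q : ℤ) - 1) ∣ (-k) - r := Int.dvd_self_sub_of_emod_eq rfl
    have h3 : r + k = -((-k) - r) := by ring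
    rw [h3]
    exact dvd_neg.mpr hdq
  · intro i hi
    obtain ⟨hilt, hrest⟩ := hi
    rw [equiv1, hdvd_iff] at hrest
    have hdq : ((q : ℤ) - 1) ∣ (-k) - r := Int.dvd_self_sub_of_emod_eq rfl
    have h1 : ((q : ℤ) - 1) ∣ ((i : ℤ) - r) := by
      have : ((q:ℤ) - 1) ∣ ((i : ℤ) + k) + ((-k) - r) := dvd_add hrest hdq
      simpa using (by
        have h2 : ((i : ℤ) + k) + ((-k) - r) = (i:ℤ) - r := by ring
        rw [h2] at this
        exact this)
    have hilt' : (i : ℤ) < (q : ℤ) - 1 := by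
      have : (i : ℤ) < ((q : ℤ) - 1) := by
        have h3 : ((q - 1 : ℕ) : ℤ) = (q : ℤ) - 1 := by
          exact_mod_cast Int.ofNat_sub (by omega : (1:ℕ) ≤ q)
        omega
      exact this
    have : (i : ℤ) - r = 0 := Int.eq_zero_of_abs_lt_dvd h1 (by
      rw [abs_lt]
      constructor <;> omega)
    omega
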